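/- arXiv:2107.14278 — 5 statements merged into one kernel-verified Lean document; each statement's English description precedes it below -/
import Mathlib

section
/- Let b, c be real numbers with b² - 4c ≥ 0, and let h(x) = (1 - (b-2a)x - √(1 + 2(2a-b)x + (b²-4c)x²)) / (2x²(a² - ab + c)) for real a with a² - ab + c ≠ 0, defined as a formal power series (the square root being the unique power series with constant term 1 whose square is 1 + 2(2a-b)x + (b²-4c)x²). Then h satisfies the functional equation h(x) = 1 / (1 - (b-2a)x - (a² - ab + c)x²·h(x)). -/
open PowerSeries

/-- The power series `h(x) = (1-(b-2a)x-√(1+2(2a-b)x+(b²-4c)x²))/(2x²(a²-ab+c))`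
satisfies `h = 1/(1-(b-2a)x-(a²-ab+c)x² h)`. -/
theorem thron_tail_functional_equation (a b c : ℝ)
    (hbc : b ^ 2 - 4 * c ≥ 0) (hd : a ^ 2 - a * b + c ≠ 0)
    (S h : PowerSeries ℝ) (hS0 : constantCoeff S = 1)
    (hS : S ^ 2 = 1 + C (2 * (2 * a - b)) * X + C (b ^ 2 - 4 * c) * X ^ 2)
    (hh : C (2 * (a ^ 2 - a * b + c)) * X ^ 2 * h = 1 - C (b - 2 * a) * X - S) :
    h * (1 - C (b - 2 * a) * X - C (a ^ 2 - a * b + c) * X ^ 2 * h) = 1 := by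
  have hC : (C (4 * (a ^ 2 - a * b + c)) : PowerSeries ℝ) ≠ 0 := by
    intro H
    have := congrArg (constantCoeff) H
    simp [constantCoeff_C] at this
    exact hd (by linarith)
  have hne : (C (4 * (a ^ 2 - a * b + c)) * X ^ 2 : PowerSeries ℝ) ≠ 0 :=
    mul_ne_zero hC (pow_ne_zero _ X_ne_zero)
  refine mul_left_cancel₀ hne ?_
  simp only [map_mul, map_add, map_sub, map_pow, map_one, map_ofNat] at hS hh ⊢
  linear_combination
    ((1 - (C b - 2 * C a) * X) + S
        - 2 * (C a ^ 2 - C a * C b + C c) * X ^ 2 * h) * hh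
      - hS
end

section
/- Let q, r, s be rational numbers and let u(x) be the unique formal power series with constant term 1 satisfying u(x) = 1/(1 - r·x - s·x·u(x)). Define F(x) = 1/(1 - q·x - s·x·u(x)). Then x·F(x) is the compositional inverse of the power series x·(1 + (q-r-s)x)/(1 + (2q-r)x + q(q-r)x²); that is, setting y = x·F(x), one has y·(1 + (q-r-s)y) = x·(1 + (2q-r)y + q(q-r)y²). -/
open PowerSeries

/-- If `u = 1/(1-rx-sxu)` and `F = 1/(1-qx-sxu)`, then `x F(x)` is the compositional
inverse of `x(1+(q-r-s)x)/(1+(2q-r)x+q(q-r)x²)`. -/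
theorem thron_revert (q r s : ℚ) (u F : PowerSeries ℚ)
    (hu0 : constantCoeff u = 1)
    (hu : u * (1 - C r * X - C s * X * u) = 1)
    (hF : F * (1 - C q * X - C s * X * u) = 1) :
    (X * F) * (1 + C (q - r - s) * (X * F)) =
      X * (1 + C (2 * q - r) * (X * F) + C (q * (q - r)) * (X * F) ^ 2) := by
  simp only [map_sub, map_mul, map_add, map_ofNat, map_one] at *
  linear_combination (C s * X ^ 2 * F ^ 2) * hu +
    (X + X ^ 2 * F * (C q - C r - C s * u)) * hF
end

section
/- The Narayana generating function N(x,y) (satisfying N = 1 + (y+1)xN + yx²N²) admits the Thron-type representation N(x,y) = 1/(1 - x - y·x·v(x,y)), where v(x,y) is the unique power series with constant term 1 satisfying v = 1/(1 - (1-y)x - y·x·v). -/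
open PowerSeries

/-- The Narayana generating function `N = 1 + (y+1)xN + yx²N²` admits the
Thron-type representation `N = 1/(1 - x - yx v)` where
`v = 1/(1-(1-y)x-yxv)`. -/
theorem narayana_thron (N v : PowerSeries (Polynomial ℚ))
    (hN0 : constantCoeff N = 1)
    (hN : N = 1 + C (Polynomial.X + 1) * X * N
        + C Polynomial.X * X ^ 2 * N ^ 2)
    (hv0 : constantCoeff v = 1)
    (hv : v * (1 - C (1 - Polynomial.X) * X
        - C Polynomial.X * X * v) = 1) :
    N * (1 - X - C Polynomial.X * X * v) = 1 := by
  rw [map_add, map_one] at hN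
  rw [map_sub, map_one] at hv
  set c : PowerSeries (Polynomial ℚ) := C Polynomial.X with hc
  have factored : (N * (1 - X - c * X * v) - 1) *
      ((1 - X - c * X * v) * (1 - (c + 1) * X)
        - c * X ^ 2 * (N * (1 - X - c * X * v) + 1)) = 0 := by
    linear_combination (1 - X - c * X * v) ^ 2 * hN - c * X * hv
  have hB : ((1 - X - c * X * v) * (1 - (c + 1) * X)
        - c * X ^ 2 * (N * (1 - X - c * X * v) + 1)) ≠ 0 := by
    intro h
    have h' := congrArg (constantCoeff) h
    simp [hc, hv0, hN0] at h'
  rcases mul_eq_zero.mp factored with h | h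
  · linear_combination h
  · exact absurd h hB
end

section
/- Let u be a parameter and let F(x) be the unique formal power series over ℚ(u) with constant term 1 satisfying F = 1/(1 - x - x²·h) where h satisfies h = 1/(1 - (u+1)x - x²·h) (Jacobi continued fraction J(1, u+1, u+1, …; 1, 1, 1, …)). Then x·F(x) is the compositional inverse of x·(1-ux)/(1-(u-1)x-(u-1)x²). -/
open PowerSeries

/-- With `h = 1/(1-(u+1)x-x²h)` and `F = 1/(1-x-x²h)` (the Jacobi fraction
`J(1,u+1,u+1,…;1,1,…)`), `x F(x)` is the compositional inverse of
`x(1-ux)/(1-(u-1)x-(u-1)x²)`. -/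
theorem consecutive_pattern_revert (h F : PowerSeries (Polynomial ℚ))
    (hh0 : constantCoeff h = 1)
    (hh : h * (1 - C (Polynomial.X + 1) * X - X ^ 2 * h) = 1)
    (hF : F * (1 - X - X ^ 2 * h) = 1) :
    (X * F) * (1 - C Polynomial.X * (X * F)) =
      X * (1 - C (Polynomial.X - 1) * (X * F)
        - C (Polynomial.X - 1) * (X * F) ^ 2) := by
  simp only [map_add, map_sub, map_one] at *
  linear_combination (X ^ 3 * F ^ 2) * hh +
    (X - C Polynomial.X * X ^ 2 * F - X ^ 3 * h * F) * hF
end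

section
/- The generating function F(x) of A033321 (binomial transform of Fine's numbers), defined as the revert transform of (1-2x)/(1-x-x²), satisfies the Jacobi continued fraction relation F = 1/(1 - x - x²·h) where h = 1/(1 - 3x - x²·h). Equivalently: if h is the unique power series with h(0)=1 satisfying h(1-3x-x²h)=1 and F = 1/(1-x-x²h), then y = xF satisfies y(1-2y) = x(1-y-y²). -/
open PowerSeries

/-- With `h = 1/(1-3x-x²h)` and `F = 1/(1-x-x²h)`, the series `F` is the
revert transform of `(1-2x)/(1-x-x²)` (A033321): `y = xF` satisfies
`y(1-2y) = x(1-y-y²)`. -/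
theorem A033321_revert (h F : PowerSeries ℚ)
    (hh0 : constantCoeff h = 1)
    (hh : h * (1 - 3 * X - X ^ 2 * h) = 1)
    (hF : F * (1 - X - X ^ 2 * h) = 1) :
    (X * F) * (1 - 2 * (X * F)) = X * (1 - (X * F) - (X * F) ^ 2) := by
  have hDne : (1 - X - X ^ 2 * h : PowerSeries ℚ) ≠ 0 := by
    intro h0
    rw [h0, mul_zero] at hF
    exact one_ne_zero hF.symm
  have key : ((X * F) * (1 - 2 * (X * F))) * (1 - X - X ^ 2 * h) ^ 2
      = (X * (1 - (X * F) - (X * F) ^ 2)) * (1 - X - X ^ 2 * h) ^ 2 := by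
    linear_combination (X * (1 - X - X ^ 2 * h)
        - 2 * X ^ 2 * (F * (1 - X - X ^ 2 * h) + 1)
        + X ^ 2 * (1 - X - X ^ 2 * h)
        + X ^ 3 * (F * (1 - X - X ^ 2 * h) + 1)) * hF + X ^ 3 * hh
  exact mul_right_cancel₀ (pow_ne_zero 2 hDne) key
end
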